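/- There exists a constant C > 0 such that for all k ≥ 1: |γ_k − √(2k/π)| ≤ C/√k; that is, γ_k = √(2k/π) + O(1/√k) as k → ∞. -/

import Mathlib

open Finset

/-- The sequence `γ` with `γ₁ = γ₂ = 1` and `γ_k = ∏_{j=1}^{⌊(k−1)/2⌋} (2j+1)/(2j)`
for `k ≥ 3` (the empty product is `1`, so the formula is also valid for `k = 1, 2`). -/
noncomputable def gammaSeq (k : ℕ) : ℝ :=
  ∏ j ∈ Finset.Icc 1 ((k - 1) / 2), (2 * (j : ℝ) + 1) / (2 * (j : ℝ))

/-- `γ̄_k = γ_k / k`. -/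
noncomputable def gammaBar (k : ℕ) : ℝ := gammaSeq k / k

/-- `δ_k = (1/3)(k + (−1)^k γ_k)`. -/
noncomputable def deltaSeq (k : ℕ) : ℝ := (1 / 3) * ((k : ℝ) + (-1) ^ k * gammaSeq k)

/-- `f_k(x,y) = (y, ((k+2)/(k+1))·x)`. -/
noncomputable def fmap (k : ℕ) : ℝ × ℝ → ℝ × ℝ :=
  fun xy => (xy.2, ((k : ℝ) + 2) / ((k : ℝ) + 1) * xy.1)

/-- `g_k(x,y) = (x + δ_{k+1}, ((k+2)/(k+1))·(y − δ_{k+1}))`. -/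
noncomputable def gmap (k : ℕ) : ℝ × ℝ → ℝ × ℝ :=
  fun xy => (xy.1 + deltaSeq (k + 1), ((k : ℝ) + 2) / ((k : ℝ) + 1) * (xy.2 - deltaSeq (k + 1)))

/-- `G_{k0} = id` and `G_{km} = g_{k+m−1} ∘ g_{k+m−2} ∘ ⋯ ∘ g_k` for `m ≥ 1`. -/
noncomputable def Gmap (k : ℕ) : ℕ → (ℝ × ℝ → ℝ × ℝ)
  | 0 => id
  | m + 1 => gmap (k + m) ∘ Gmap k m

/-- `F_{km} = G_{k+1,m−1} ∘ f_k` (for `m ≥ 1`). -/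
noncomputable def Fmap (k m : ℕ) : ℝ × ℝ → ℝ × ℝ := Gmap (k + 1) (m - 1) ∘ fmap k

/-- The sets `A_k ⊆ ℝ²`: `A₁ = {(0,0)}` and `A_{k+1} = f_k(A_k) ∪ g_k(A_k)` for
`k ≥ 1` (the value at `0` is junk). -/
noncomputable def Aset : ℕ → Set (ℝ × ℝ)
  | 0 => ∅
  | 1 => {(0, 0)}
  | k + 2 => fmap (k + 1) '' Aset (k + 1) ∪ gmap (k + 1) '' Aset (k + 1)

lemma prod_sq_mul_W (n : ℕ) :
    (∏ j ∈ Finset.Icc 1 n, (2 * (j : ℝ) + 1) / (2 * j)) ^ 2 * Real.Wallis.W n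
      = 2 * n + 1 := by
  induction n with
  | zero => simp [Real.Wallis.W]
  | succ n ih =>
    rw [Finset.prod_Icc_succ_top (Nat.succ_le_succ (Nat.zero_le n)), Real.Wallis.W_succ]
    have h1 : (2 * (n : ℝ) + 1) ≠ 0 := by positivity
    have h2 : (2 * (n : ℝ) + 2) ≠ 0 := by positivity
    have h3 : (2 * (n : ℝ) + 3) ≠ 0 := by positivity
    have key : ((∏ j ∈ Finset.Icc 1 n, (2 * (j : ℝ) + 1) / (2 * j))
        * ((2 * ((n:ℝ)+1) + 1) / (2 * ((n:ℝ)+1)))) ^ 2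
        * (Real.Wallis.W n * ((2 * n + 2) / (2 * n + 1) * ((2 * n + 2) / (2 * n + 3))))
        = ((∏ j ∈ Finset.Icc 1 n, (2 * (j : ℝ) + 1) / (2 * j)) ^ 2 * Real.Wallis.W n)
          * (((2 * (n:ℝ) + 3) ^ 2 / (2 * (n:ℝ) + 2) ^ 2)
            * ((2 * n + 2) / (2 * n + 1) * ((2 * n + 2) / (2 * n + 3)))) := by
      field_simp
      ring
    push_cast
    push_cast at key
    rw [key, ih]
    field_simp
    ring

lemma gammaSeq_pos (k : ℕ) : 0 < gammaSeq k := by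
  apply Finset.prod_pos
  intro j hj
  simp only [Finset.mem_Icc] at hj
  have : (0:ℝ) < j := by exact_mod_cast hj.1
  positivity

lemma gammaSeq_sq_bounds (k : ℕ) :
    2 * (2 * ((k - 1) / 2 : ℕ) + 1) / Real.pi ≤ gammaSeq k ^ 2 ∧
    gammaSeq k ^ 2 ≤ 2 * (2 * ((k - 1) / 2 : ℕ) + 2) / Real.pi := by
  set n : ℕ := (k - 1) / 2 with hn
  have hid := prod_sq_mul_W n
  have hW := Real.Wallis.W_pos n
  have hWle := Real.Wallis.W_le n
  have hleW := Real.Wallis.le_W n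
  have hpi := Real.pi_pos
  have hg : gammaSeq k ^ 2 = (2 * n + 1) / Real.Wallis.W n := by
    rw [eq_div_iff (ne_of_gt hW), ← hid]; rfl
  constructor
  · rw [hg, div_le_div_iff₀ hpi hW]
    nlinarith
  · rw [hg, div_le_div_iff₀ hW hpi]
    have h1 : (0:ℝ) < 2 * n + 1 := by positivity
    have h2 : (0:ℝ) < 2 * n + 2 := by positivity
    have h3 : (2 * (n:ℝ) + 1) * (Real.pi / 2) ≤ Real.Wallis.W n * (2 * n + 2) := by
      rw [← div_le_iff₀ h2]
      rw [div_mul_eq_mul_div] at hleW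
      exact hleW
    nlinarith

theorem stmt18 :
    ∃ C : ℝ, 0 < C ∧ ∀ k : ℕ, 1 ≤ k →
      |gammaSeq k - Real.sqrt (2 * (k : ℝ) / Real.pi)| ≤ C / Real.sqrt k := by
  refine ⟨2, by norm_num, fun k hk => ?_⟩
  set n : ℕ := (k - 1) / 2 with hn
  have hkn1 : 2 * n + 1 ≤ k := by omega
  have hkn2 : k ≤ 2 * n + 2 := by omega
  have hpi := Real.pi_pos
  obtain ⟨hlo, hhi⟩ := gammaSeq_sq_bounds k
  rw [← hn] at hlo hhi
  set A : ℝ := 2 * (2 * (n:ℕ) + 1) / Real.pi with hA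
  set B : ℝ := 2 * (2 * (n:ℕ) + 2) / Real.pi with hB
  have hA0 : 0 < A := by positivity
  have hB0 : 0 < B := by positivity
  set a := Real.sqrt A
  set b := Real.sqrt B
  have ha0 : 0 < a := Real.sqrt_pos.mpr hA0
  have hb0 : 0 < b := Real.sqrt_pos.mpr hB0
  have hg0 := gammaSeq_pos k
  -- a ≤ γ ≤ b
  have hga : a ≤ gammaSeq k := by
    have := Real.sqrt_le_sqrt hlo
    rwa [Real.sqrt_sq hg0.le] at this
  have hgb : gammaSeq k ≤ b := by
    have := Real.sqrt_le_sqrt hhi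
    rwa [Real.sqrt_sq hg0.le] at this
  -- a ≤ s ≤ b where s = √(2k/π)
  set s := Real.sqrt (2 * (k:ℝ) / Real.pi)
  have hsa : a ≤ s := by
    apply Real.sqrt_le_sqrt
    rw [hA]
    gcongr
    have : (2 * n + 1 : ℝ) ≤ (k:ℝ) := by exact_mod_cast hkn1
    linarith
  have hsb : s ≤ b := by
    apply Real.sqrt_le_sqrt
    rw [hB]
    gcongr
    have : (k:ℝ) ≤ (2 * n + 2 : ℝ) := by exact_mod_cast hkn2
    linarith
  -- |γ - s| ≤ b - a
  have habs : |gammaSeq k - s| ≤ b - a := by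
    rw [abs_sub_le_iff]; constructor <;> linarith
  -- b - a ≤ 1/(π a)
  have hsq : (b - a) * (a + b) = 2 / Real.pi := by
    have hb2 : b ^ 2 = B := Real.sq_sqrt hB0.le
    have ha2 : a ^ 2 = A := Real.sq_sqrt hA0.le
    have : (b - a) * (a + b) = b ^ 2 - a ^ 2 := by ring
    rw [this, hb2, ha2, hA, hB]
    field_simp
    ring
  have hab : a ≤ b := le_trans hsa hsb
  have hsq2 : Real.pi * ((b - a) * (a + b)) = 2 := by
    rw [hsq]; field_simp
  have hba : b - a ≤ 1 / (Real.pi * a) := by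
    rw [le_div_iff₀ (by positivity)]
    nlinarith [mul_nonneg (mul_nonneg hpi.le (sub_nonneg.mpr hab)) (sub_nonneg.mpr hab)]
  -- a ≥ √k / √π
  have hak : Real.sqrt k / Real.sqrt Real.pi ≤ a := by
    rw [← Real.sqrt_div' _ ?_] <;> try positivity
    · apply Real.sqrt_le_sqrt
      rw [hA, div_le_div_iff₀ hpi hpi]
      have : (k:ℝ) ≤ 2 * (2 * n + 1) := by
        have : (k:ℝ) ≤ (2 * n + 2 : ℝ) := by exact_mod_cast hkn2
        linarith [Nat.cast_nonneg (α := ℝ) n]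
      nlinarith
  have hk0 : (0:ℝ) < Real.sqrt k := Real.sqrt_pos.mpr (by exact_mod_cast hk)
  have hpisqrt : 1 ≤ Real.sqrt Real.pi := by
    rw [show (1:ℝ) = Real.sqrt 1 by simp]
    exact Real.sqrt_le_sqrt (by linarith [Real.pi_gt_three])
  have hfin : 1 / (Real.pi * a) ≤ 2 / Real.sqrt k := by
    rw [div_le_div_iff₀ (by positivity) hk0]
    have h1 : Real.sqrt k ≤ Real.sqrt Real.pi * a := by
      have h := mul_le_mul_of_nonneg_left hak (Real.sqrt_nonneg Real.pi)
      have he : Real.sqrt Real.pi * (Real.sqrt (k:ℝ) / Real.sqrt Real.pi) = Real.sqrt k := by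
        field_simp
      linarith [he ▸ h]
    have hsps : Real.sqrt Real.pi ≤ Real.pi := by
      nlinarith [Real.sq_sqrt Real.pi_pos.le, hpisqrt]
    have h2 : Real.sqrt Real.pi * a ≤ Real.pi * a :=
      mul_le_mul_of_nonneg_right hsps ha0.le
    nlinarith [mul_pos hpi ha0]
  calc |gammaSeq k - s| ≤ b - a := habs
    _ ≤ 1 / (Real.pi * a) := hba
    _ ≤ 2 / Real.sqrt k := hfin
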